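/- Let Γ be a group, G a finite normal subgroup of Γ, and T a divisible abelian subgroup of Γ such that every element of Γ is a product of an element of G and an element of T (i.e. Γ = G·T). Set μ = G ∩ T. Then μ is contained in the center of Γ (in particular μ is a normal subgroup of Γ and of G), the quotient group Γ/μ is isomorphic to the direct product (G/μ) × (T/μ), and the inclusion T ⊆ Γ induces a group isomorphism T/μ ≅ Γ/G. -/

import Mathlib

/-- **Lemma 4.1 (group-theoretic content).** Let `Γ` be a group, `G` a finite normal
subgroup, `T` a divisible abelian subgroup with `Γ = G·T`, and `μ = G ⊓ T`.  Then `μ` is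
central in `Γ` (in particular normal in `Γ` and in `G`), `Γ/μ ≅ (G/μ) × (T/μ)`, and the
inclusion `T ⊆ Γ` induces an isomorphism `T/μ ≅ Γ/G`. -/
theorem stmt_0 {Γ : Type*} [Group Γ] (G T : Subgroup Γ) [Finite G] [G.Normal]
    (hTab : ∀ a ∈ T, ∀ b ∈ T, a * b = b * a)
    (hTdiv : ∀ t ∈ T, ∀ n : ℕ, 1 ≤ n → ∃ u ∈ T, u ^ n = t)
    (hGT : ∀ γ : Γ, ∃ g ∈ G, ∃ t ∈ T, γ = g * t) :
    G ⊓ T ≤ Subgroup.center Γ ∧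
    (G ⊓ T).Normal ∧ ((G ⊓ T).subgroupOf G).Normal ∧
    (∀ [_h1 : (G ⊓ T).Normal] [_h2 : ((G ⊓ T).subgroupOf G).Normal]
       [_h3 : ((G ⊓ T).subgroupOf T).Normal],
      Nonempty ((Γ ⧸ (G ⊓ T)) ≃*
        (G ⧸ (G ⊓ T).subgroupOf G) × (T ⧸ (G ⊓ T).subgroupOf T)) ∧
      ∃ e : (T ⧸ (G ⊓ T).subgroupOf T) ≃* (Γ ⧸ G),
        ∀ t : T, e (QuotientGroup.mk t) = QuotientGroup.mk (t : Γ)) := by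
  -- T centralizes G
  have key : ∀ t ∈ T, ∀ g ∈ G, t * g = g * t := by
    intro t ht g hg
    obtain ⟨u, hu, hun⟩ := hTdiv t ht (Nat.card (MulAut G)) Nat.card_pos
    have h1 : MulAut.conjNormal t = (1 : MulAut G) := by
      rw [← hun, map_pow, pow_card_eq_one']
    have h2 : ((MulAut.conjNormal t ⟨g, hg⟩ : G) : Γ) = g := by
      rw [h1]; rfl
    rw [MulAut.conjNormal_apply] at h2
    calc t * g = (t * g * t⁻¹) * t := by group
    _ = g * t := by rw [h2]
  have hcent : G ⊓ T ≤ Subgroup.center Γ := by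
    intro z hz
    rw [Subgroup.mem_center_iff]
    intro γ
    obtain ⟨g, hg, t, ht, rfl⟩ := hGT γ
    have h1 := key z hz.2 g hg
    have h2 := hTab t ht z hz.2
    calc g * t * z = g * (z * t) := by rw [mul_assoc, h2]
    _ = (z * g) * t := by rw [← mul_assoc, ← h1]
    _ = z * (g * t) := by rw [mul_assoc]
  have hcomm : ∀ z ∈ G ⊓ T, ∀ γ : Γ, γ * z = z * γ := fun z hz => by
    have := hcent hz; rwa [Subgroup.mem_center_iff] at this
  have hN1 : (G ⊓ T).Normal := ⟨fun n hn g => by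
    rw [hcomm n hn g, mul_assoc, mul_inv_cancel, mul_one]; exact hn⟩
  have hN2 : ((G ⊓ T).subgroupOf G).Normal := ⟨fun n hn g => by
    rw [Subgroup.mem_subgroupOf] at hn ⊢
    push_cast
    rw [hcomm _ hn g, mul_assoc, mul_inv_cancel, mul_one]; exact hn⟩
  refine ⟨hcent, hN1, hN2, ?_⟩
  intro h1 h2 h3
  -- well-definedness of the decomposition, modulo μ
  have wd : ∀ (g g' : G) (t t' : T), (g : Γ) * t = g' * t' →
      (QuotientGroup.mk g : G ⧸ (G ⊓ T).subgroupOf G) = QuotientGroup.mk g' ∧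
      (QuotientGroup.mk t : T ⧸ (G ⊓ T).subgroupOf T) = QuotientGroup.mk t' := by
    intro g g' t t' h
    have e1 : (g : Γ)⁻¹ * (g' : Γ) = (t : Γ) * (t' : Γ)⁻¹ := by
      rw [inv_mul_eq_iff_eq_mul, ← mul_assoc, eq_mul_inv_iff_mul_eq]
      exact h.symm
    have hG1 : (t : Γ) * (t' : Γ)⁻¹ ∈ G := e1 ▸ mul_mem (inv_mem g.2) g'.2
    have hG2 : (t : Γ)⁻¹ * (t' : Γ) ∈ G := by
      have h2 := inv_mem hG1
      rw [mul_inv_rev, inv_inv] at h2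
      rwa [hTab _ t'.2 _ (inv_mem t.2)] at h2
    constructor
    · rw [QuotientGroup.eq, Subgroup.mem_subgroupOf]
      refine ⟨(g⁻¹ * g').2, ?_⟩
      show ((g⁻¹ * g' : G) : Γ) ∈ T
      push_cast
      rw [e1]
      exact mul_mem t.2 (inv_mem t'.2)
    · rw [QuotientGroup.eq, Subgroup.mem_subgroupOf]
      refine ⟨?_, (t⁻¹ * t').2⟩
      show ((t⁻¹ * t' : T) : Γ) ∈ G
      push_cast
      exact hG2
  choose gg hgg tt htt hdec using hGT
  let φ : Γ →* (G ⧸ (G ⊓ T).subgroupOf G) × (T ⧸ (G ⊓ T).subgroupOf T) :=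
  { toFun := fun γ => (QuotientGroup.mk ⟨gg γ, hgg γ⟩, QuotientGroup.mk ⟨tt γ, htt γ⟩)
    map_one' := by
      have := wd ⟨gg 1, hgg 1⟩ 1 ⟨tt 1, htt 1⟩ 1 (by simpa using (hdec 1).symm)
      exact Prod.ext this.1 this.2
    map_mul' := by
      intro x y
      have hxy : ((⟨gg (x*y), hgg _⟩ : G) : Γ) * ((⟨tt (x*y), htt _⟩ : T) : Γ) =
          ((⟨gg x, hgg x⟩ * ⟨gg y, hgg y⟩ : G) : Γ) * ((⟨tt x, htt x⟩ * ⟨tt y, htt y⟩ : T) : Γ) := by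
        show gg (x*y) * tt (x*y) = (gg x * gg y) * (tt x * tt y)
        rw [← hdec (x*y)]
        have h5 : (gg x * gg y) * (tt x * tt y) = (gg x * tt x) * (gg y * tt y) := by
          rw [mul_assoc (gg x), ← mul_assoc (gg y), ← key _ (htt x) _ (hgg y)]
          group
        rw [h5, ← hdec x, ← hdec y]
      have := wd ⟨gg (x*y), hgg (x*y)⟩ _ ⟨tt (x*y), htt (x*y)⟩ _ hxy
      exact Prod.ext this.1 this.2 }
  have hsurj : Function.Surjective φ := by
    rintro ⟨qa, qb⟩
    induction qa using QuotientGroup.induction_on with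
    | H a =>
    induction qb using QuotientGroup.induction_on with
    | H b =>
    refine ⟨(a : Γ) * b, ?_⟩
    have := wd ⟨gg (a*b), hgg (a*b)⟩ a ⟨tt (a*b), htt (a*b)⟩ b (hdec _).symm
    exact Prod.ext this.1 this.2
  have hker : φ.ker = G ⊓ T := by
    ext γ
    constructor
    · intro h
      have hp : φ γ = 1 := h
      have hg1 : (QuotientGroup.mk (⟨gg γ, hgg γ⟩ : G) : G ⧸ (G ⊓ T).subgroupOf G) = 1 :=
        congrArg Prod.fst hp
      have ht1 : (QuotientGroup.mk (⟨tt γ, htt γ⟩ : T) : T ⧸ (G ⊓ T).subgroupOf T) = 1 :=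
        congrArg Prod.snd hp
      rw [QuotientGroup.eq_one_iff, Subgroup.mem_subgroupOf] at hg1 ht1
      rw [hdec γ]
      exact mul_mem (hg1 : (gg γ : Γ) ∈ G ⊓ T) (ht1 : (tt γ : Γ) ∈ G ⊓ T)
    · intro h
      have hd : ((⟨gg γ, hgg γ⟩ : G) : Γ) * ((⟨tt γ, htt γ⟩ : T) : Γ) =
          ((⟨γ, h.1⟩ : G) : Γ) * ((1 : T) : Γ) := by
        show gg γ * tt γ = γ * 1
        rw [← hdec γ, mul_one]
      have hwd := wd ⟨gg γ, hgg γ⟩ ⟨γ, h.1⟩ ⟨tt γ, htt γ⟩ 1 hd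
      show φ γ = 1
      have hg' : (QuotientGroup.mk (⟨gg γ, hgg γ⟩ : G) : G ⧸ (G ⊓ T).subgroupOf G) = 1 := by
        rw [hwd.1, QuotientGroup.eq_one_iff, Subgroup.mem_subgroupOf]
        exact h
      have ht' : (QuotientGroup.mk (⟨tt γ, htt γ⟩ : T) : T ⧸ (G ⊓ T).subgroupOf T) = 1 := by
        rw [hwd.2]
        rfl
      exact Prod.ext hg' ht'
  constructor
  · exact ⟨(QuotientGroup.quotientMulEquivOfEq hker.symm).trans
      (QuotientGroup.quotientKerEquivOfSurjective φ hsurj)⟩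
  · let ψ : T →* Γ ⧸ G := (QuotientGroup.mk' G).comp T.subtype
    have hψsurj : Function.Surjective ψ := by
      rintro q
      induction q using QuotientGroup.induction_on with
      | H γ =>
      refine ⟨⟨tt γ, htt γ⟩, ?_⟩
      show QuotientGroup.mk (tt γ) = QuotientGroup.mk γ
      rw [QuotientGroup.eq]
      show (tt γ)⁻¹ * γ ∈ G
      nth_rewrite 2 [hdec γ]
      rw [← mul_assoc]
      exact Subgroup.Normal.conj_mem' ‹G.Normal› _ (hgg γ) _
    have hψker : ψ.ker = (G ⊓ T).subgroupOf T := by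
      ext t
      simp only [MonoidHom.mem_ker, Subgroup.mem_subgroupOf, Subgroup.mem_inf]
      constructor
      · intro h
        have : ((t : Γ)) ∈ G := by
          rwa [show ψ t = QuotientGroup.mk (t : Γ) from rfl, QuotientGroup.eq_one_iff] at h
        exact ⟨this, t.2⟩
      · intro h
        rw [show ψ t = QuotientGroup.mk (t : Γ) from rfl, QuotientGroup.eq_one_iff]
        exact h.1
    refine ⟨(QuotientGroup.quotientMulEquivOfEq hψker.symm).trans
      (QuotientGroup.quotientKerEquivOfSurjective ψ hψsurj), fun t => rfl⟩
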